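/- In the group SL₂(ℝ₁) with ℝ₁ = ℝ[t, t⁻¹] the Laurent polynomial ring, let θ(x) = ((x⁻¹)ᵀ)^σ where σ is the ring automorphism fixing ℝ and interchanging t and t⁻¹, and let u be the upper unitriangular matrix with off-diagonal entry 1 + t. Then v := τ(u) = u θ(u)⁻¹ has characteristic polynomial λ² − (t + 4 + t⁻¹)λ + 1, which does not split into linear factors over ℝ[t, t⁻¹]; hence v is not conjugate in SL₂(ℝ[t, t⁻¹]) to a diagonal matrix with entries in ℝ[t, t⁻¹]. -/

import Mathlib

open LaurentPolynomial Polynomial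

/-- In `SL₂(ℝ[t,t⁻¹])`, the element `v = τ(u)` (with `u` upper unitriangular with entry
`1+t`) has characteristic polynomial `λ² − (t + 4 + t⁻¹)λ + 1`, which has no root in
`ℝ[t,t⁻¹]`; hence `v` is not conjugate within `SL₂(ℝ[t,t⁻¹])` to a diagonal matrix. -/
theorem stmt_16 :
    let t : LaurentPolynomial ℝ := T 1
    let tinv : LaurentPolynomial ℝ := T (-1)
    let v : Matrix (Fin 2) (Fin 2) (LaurentPolynomial ℝ) :=
      !![1 + (1 + t) * (1 + tinv), 1 + t; 1 + tinv, 1]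
    v.charpoly = X ^ 2 - Polynomial.C (t + 4 + tinv) * X + 1 ∧
    (¬ ∃ lam : LaurentPolynomial ℝ,
      lam ^ 2 - (t + 4 + tinv) * lam + 1 = 0) ∧
    (¬ ∃ g h : Matrix (Fin 2) (Fin 2) (LaurentPolynomial ℝ),
      g.det = 1 ∧ g * h = 1 ∧ (g * v * h).IsDiag) := by
  intro t tinv v
  have htt : t * tinv = 1 := by
    show T 1 * T (-1) = 1
    rw [← T_add]; norm_num
  have hdetv : v.det = 1 := by
    rw [show v.det = (1 + (1 + t) * (1 + tinv)) * 1 - (1 + t) * (1 + tinv) from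
      Matrix.det_fin_two_of _ _ _ _]
    ring
  have htrv : v.trace = t + 4 + tinv := by
    rw [Matrix.trace_fin_two]
    show (1 + (1 + t) * (1 + tinv)) + 1 = t + 4 + tinv
    linear_combination htt
  have hroot : ¬ ∃ lam : LaurentPolynomial ℝ,
      lam ^ 2 - (t + 4 + tinv) * lam + 1 = 0 := by
    rintro ⟨lam, hlam⟩
    set u : ℝˣ := Units.mk0 (-(1/2) : ℝ) (by norm_num) with hu
    set φ : LaurentPolynomial ℝ →ₐ[ℝ] ℝ :=
      AddMonoidAlgebra.lift ℝ ℝ ℤ ((Units.coeHom ℝ).comp (zpowersHom ℝˣ u)) with hφ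
    have hT : ∀ n : ℤ, φ (T n) = ((u ^ n : ℝˣ) : ℝ) := by
      intro n
      show φ (AddMonoidAlgebra.single n (1 : ℝ)) = _
      rw [hφ, AddMonoidAlgebra.lift_single]
      simp
    have h1 : φ t = -(1/2) := by
      rw [show φ t = φ (T 1) from rfl, hT 1]
      norm_num [hu]
    have h2 : φ tinv = -2 := by
      have := hT (-1)
      rw [this]
      norm_num [hu]
    have := congrArg φ hlam
    rw [map_add, map_sub, map_pow, map_mul, map_add, map_add, map_one, map_zero,
      map_ofNat, h1, h2] at this
    nlinarith [sq_nonneg (φ lam - 3/4), this]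
  refine ⟨?_, hroot, ?_⟩
  · have hC : (Polynomial.C t) * Polynomial.C tinv = (1 : Polynomial (LaurentPolynomial ℝ)) := by
      rw [← map_mul, htt, map_one]
    rw [Matrix.charpoly, Matrix.det_fin_two, Matrix.charmatrix_apply_eq,
      Matrix.charmatrix_apply_eq, Matrix.charmatrix_apply_ne _ _ _ (by decide),
      Matrix.charmatrix_apply_ne _ _ _ (by decide)]
    have e00 : v 0 0 = 1 + (1 + t) * (1 + tinv) := rfl
    have e01 : v 0 1 = 1 + t := rfl
    have e10 : v 1 0 = 1 + tinv := rfl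
    have e11 : v 1 1 = (1 : LaurentPolynomial ℝ) := rfl
    rw [e00, e01, e10, e11]
    simp only [map_add, map_mul, map_one, map_ofNat]
    linear_combination (-Polynomial.X : Polynomial (LaurentPolynomial ℝ)) * hC
  · rintro ⟨g, h, hg, hgh, hdiag⟩
    have hhg : h * g = 1 := mul_eq_one_comm.mp hgh
    set d := g * v * h with hd
    have hd01 : d 0 1 = 0 := hdiag (by decide)
    have hd10 : d 1 0 = 0 := hdiag (by decide)
    have htr : d 0 0 + d 1 1 = t + 4 + tinv := by
      have h1 : d.trace = v.trace := by
        rw [hd, Matrix.trace_mul_cycle, hhg, Matrix.one_mul]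
      rw [Matrix.trace_fin_two, htrv] at h1
      exact h1
    have hdet : d 0 0 * d 1 1 = 1 := by
      have hdeth : g.det * h.det = 1 := by
        rw [← Matrix.det_mul, hgh, Matrix.det_one]
      have h1 : d.det = 1 := by
        rw [hd, Matrix.det_mul, Matrix.det_mul, hdetv]
        linear_combination hdeth
      rw [Matrix.det_fin_two, hd01, hd10] at h1
      linear_combination h1
    exact hroot ⟨d 0 0, by linear_combination d 0 0 * htr - hdet⟩
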